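/- Let K be a nonnegative integer and let a_0, …, a_K be nonnegative integers. Set S_k := a_0 + ⋯ + a_k for k ∈ {0,…,K} and set a_{K+1} := 0. Then for every real β ∈ (1,2) and every real λ ∈ (3/4, 1) it holds that Σ_{k=0}^{K} (max{S_k − a_{k+1}, 0})^β / S_k^{β−1} · λ^k ≥ ((2λ−1)/(2λ)) · Σ_{k=0}^{K} a_k λ^k, where any summand on the left-hand side with S_k = 0 is interpreted as 0. -/

import Mathlib

set_option maxHeartbeats 1000000 in
private lemma quad_le_rpow (β S M : ℝ) (hβ1 : 1 < β) (hβ2 : β < 2) (hM : 0 ≤ M)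
    (hMS : M ≤ S) (hS : 0 < S) : M ^ 2 / S ≤ M ^ β / S ^ (β - 1) := by
  rcases eq_or_lt_of_le hM with h0 | h0
  · rw [← h0, Real.zero_rpow (by linarith)]
    norm_num
  · have h1 : M ^ β = M ^ (2:ℕ) * M ^ (β - 2) := by
      rw [← Real.rpow_natCast M 2, ← Real.rpow_add h0]
      norm_num
    have h2 : S ^ (β - 1) = S * S ^ (β - 2) := by
      nth_rewrite 2 [← Real.rpow_one S]
      rw [← Real.rpow_add hS]
      congr 1
      ring
    have h3 : S ^ (β - 2) ≤ M ^ (β - 2) :=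
      Real.rpow_le_rpow_of_nonpos h0 hMS (by linarith)
    have h4 : (0:ℝ) < S ^ (β - 2) := Real.rpow_pos_of_pos hS _
    rw [h1, h2, div_le_div_iff₀ hS (by positivity)]
    calc M ^ 2 * (S * S ^ (β - 2)) ≤ M ^ 2 * (S * M ^ (β - 2)) := by gcongr
      _ = M ^ 2 * M ^ (β - 2) * S := by ring

set_option maxHeartbeats 1000000 in
private lemma key_step (lam S A B : ℝ) (hS : 0 ≤ S) (hA : 0 ≤ A) (hB : 0 ≤ B)
    (hl1 : 3 / 4 < lam) (hl2 : lam < 1) :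
    (2 * lam - 1) / (2 * lam) * A + min A ((lam - 1/4) * S + (1 - lam) * A) / lam ≤
      (if S + A = 0 then 0 else (max (S + A - B) 0) ^ 2 / (S + A)) +
        min B ((lam - 1/4) * (S + A) + (1 - lam) * B) := by
  have hlam : (0:ℝ) < lam := by linarith
  by_cases hT : S + A = 0
  · have hS0 : S = 0 := by linarith
    have hA0 : A = 0 := by linarith
    rw [if_pos hT, hS0, hA0]
    norm_num
    exact ⟨hB, by nlinarith⟩
  · have hT' : 0 < S + A := lt_of_le_of_ne (by linarith) (Ne.symm hT)
    rw [if_neg hT]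
    set X := min A ((lam - 1/4) * S + (1 - lam) * A) with hXdef
    set Y := min B ((lam - 1/4) * (S + A) + (1 - lam) * B) with hYdef
    set Z := (max (S + A - B) 0) ^ 2 with hZdef
    have e1 : (2 * lam - 1) / (2 * lam) * A + X / lam = ((lam - 1/2) * A + X) / lam := by
      field_simp
    have e2 : Z / (S + A) + Y = (Z + Y * (S + A)) / (S + A) := by
      field_simp
    rw [e1, e2, div_le_div_iff₀ hlam hT']
    have hSA : (0:ℝ) ≤ S + A := le_of_lt hT'
    rcases le_total A ((lam - 1/4) * S + (1 - lam) * A) with h1 | h1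
    · have eX : X = A := min_eq_left h1
      rcases le_total B ((lam - 1/4) * (S + A) + (1 - lam) * B) with h2 | h2
      · have eY : Y = B := min_eq_left h2
        rcases le_total B (S + A) with h3 | h3
        · have eZ : Z = (S + A - B) ^ 2 := by rw [hZdef, max_eq_left (by linarith)]
          rw [eX, eY, eZ]
          nlinarith [sq_nonneg (S+A-B), sq_nonneg (S+A-2*B), mul_nonneg hS hB,
            mul_nonneg hA hB, mul_nonneg hS hA, sq_nonneg (S-A), sq_nonneg B,
            sq_nonneg (S+A), mul_nonneg hS hS, mul_nonneg hA hA]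
        · have eZ : Z = 0 := by
            rw [hZdef, max_eq_right (by linarith)]
            ring
          rw [eX, eY, eZ]
          nlinarith [mul_nonneg hS hB, mul_nonneg hA hB, mul_nonneg hS hA,
            sq_nonneg (S+A), mul_nonneg hS hS, mul_nonneg hA hA]
      · have eY : Y = (lam - 1/4) * (S + A) + (1 - lam) * B := min_eq_right h2
        rcases le_total B (S + A) with h3 | h3
        · have eZ : Z = (S + A - B) ^ 2 := by rw [hZdef, max_eq_left (by linarith)]
          rw [eX, eY, eZ]
          nlinarith [mul_nonneg (sub_nonneg.2 h1) hSA,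
            sq_nonneg (2*(S+A-B) - (1-lam)*(S+A)),
            mul_pos (by linarith : (0:ℝ) < 4*lam-3) (by linarith : (0:ℝ) < 1-lam),
            sq_nonneg (S+A),
            mul_nonneg (mul_nonneg (by linarith : (0:ℝ) ≤ 4*lam-3)
              (by linarith : (0:ℝ) ≤ 1-lam)) (sq_nonneg (S+A)),
            mul_nonneg (mul_nonneg (by linarith : (0:ℝ) ≤ 4*lam-3)
              (by linarith : (0:ℝ) ≤ 4*lam-3)) (sq_nonneg (S+A)),
            mul_nonneg (mul_nonneg (by linarith : (0:ℝ) ≤ 1-lam)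
              (by linarith : (0:ℝ) ≤ 1-lam)) (sq_nonneg (S+A))]
        · have eZ : Z = 0 := by
            rw [hZdef, max_eq_right (by linarith)]
            ring
          rw [eX, eY, eZ]
          nlinarith [mul_nonneg (sub_nonneg.2 h1) hSA,
            mul_nonneg (mul_nonneg (by nlinarith : (0:ℝ) ≤ lam*(1-lam)) (sub_nonneg.2 h3)) hSA,
            mul_nonneg (mul_nonneg (by linarith : (0:ℝ) ≤ 1-lam) hS) hSA,
            mul_nonneg (mul_nonneg (by linarith : (0:ℝ) ≤ 3*lam-2) hA) hSA]
    · have eX : X = (lam - 1/4) * S + (1 - lam) * A := min_eq_right h1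
      rcases le_total B ((lam - 1/4) * (S + A) + (1 - lam) * B) with h2 | h2
      · have eY : Y = B := min_eq_left h2
        rcases le_total B (S + A) with h3 | h3
        · have eZ : Z = (S + A - B) ^ 2 := by rw [hZdef, max_eq_left (by linarith)]
          rw [eX, eY, eZ]
          nlinarith [sq_nonneg (S+A-B), sq_nonneg (S+A-2*B), mul_nonneg hS hB,
            mul_nonneg hA hB, mul_nonneg hS hA, sq_nonneg B, sq_nonneg (S+A),
            mul_nonneg hS hS, mul_nonneg hA hA]
        · have eZ : Z = 0 := by
            rw [hZdef, max_eq_right (by linarith)]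
            ring
          rw [eX, eY, eZ]
          nlinarith [mul_nonneg hS hB, mul_nonneg hA hB, mul_nonneg hS hA,
            sq_nonneg (S+A), mul_nonneg hS hS, mul_nonneg hA hA]
      · have eY : Y = (lam - 1/4) * (S + A) + (1 - lam) * B := min_eq_right h2
        rcases le_total B (S + A) with h3 | h3
        · have eZ : Z = (S + A - B) ^ 2 := by rw [hZdef, max_eq_left (by linarith)]
          rw [eX, eY, eZ]
          nlinarith [sq_nonneg (2*(S+A-B) - (1-lam)*(S+A)), mul_nonneg hS hSA,
            mul_nonneg hA hSA, sq_nonneg (S+A),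
            mul_nonneg (mul_nonneg (by linarith : (0:ℝ) ≤ 4*lam-3)
              (by linarith : (0:ℝ) ≤ 1-lam)) (sq_nonneg (S+A)),
            mul_nonneg (mul_nonneg (by linarith : (0:ℝ) ≤ 4*lam-3)
              (by linarith : (0:ℝ) ≤ 1-lam)) (mul_nonneg hS hSA),
            mul_nonneg (mul_nonneg (by linarith : (0:ℝ) ≤ 1-lam)
              (by linarith : (0:ℝ) ≤ 1-lam)) (sq_nonneg (S+A))]
        · have eZ : Z = 0 := by
            rw [hZdef, max_eq_right (by linarith)]
            ring
          rw [eX, eY, eZ]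
          nlinarith [mul_nonneg (mul_nonneg (by nlinarith : (0:ℝ) ≤ lam*(1-lam))
              (sub_nonneg.2 h3)) hSA,
            mul_nonneg (mul_nonneg (by linarith : (0:ℝ) ≤ 1-lam) hS) hSA,
            mul_nonneg (mul_nonneg (by linarith : (0:ℝ) ≤ 3*lam-2) hA) hSA]

private lemma aux_induction (a : ℕ → ℕ) (β lam : ℝ) (hβ1 : 1 < β) (hβ2 : β < 2)
    (hl1 : 3 / 4 < lam) (hl2 : lam < 1) (K : ℕ) :
    (2 * lam - 1) / (2 * lam) * ∑ k ∈ Finset.range (K + 1), (a k : ℝ) * lam ^ k ≤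
      (∑ k ∈ Finset.range (K + 1),
        (if (∑ j ∈ Finset.range (k + 1), (a j : ℝ)) = 0 then 0
          else (max ((∑ j ∈ Finset.range (k + 1), (a j : ℝ)) - (a (k + 1) : ℝ)) 0) ^ β /
            (∑ j ∈ Finset.range (k + 1), (a j : ℝ)) ^ (β - 1) * lam ^ k)) +
      lam ^ K * min ((a (K + 1) : ℝ))
        ((lam - 1/4) * (∑ j ∈ Finset.range (K + 1), (a j : ℝ)) + (1 - lam) * (a (K + 1) : ℝ)) := by
  have hlam : (0:ℝ) < lam := by linarith
  induction K with
  | zero =>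
    have hk := key_step lam 0 (a 0 : ℝ) (a 1 : ℝ) le_rfl (Nat.cast_nonneg _)
      (Nat.cast_nonneg _) hl1 hl2
    simp only [zero_add] at hk
    simp only [zero_add, Finset.sum_range_one, pow_zero, mul_one, one_mul]
    have hmin0 : (0:ℝ) ≤ min ((a 0 : ℝ)) ((lam - 1/4) * 0 + (1 - lam) * (a 0 : ℝ)) :=
      le_min (Nat.cast_nonneg _) (by nlinarith [Nat.cast_nonneg (α := ℝ) (a 0)])
    have hdiv := div_nonneg hmin0 hlam.le
    have hq : (if ((a 0 : ℝ)) = 0 then (0:ℝ)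
          else (max ((a 0 : ℝ) - (a 1 : ℝ)) 0) ^ 2 / (a 0 : ℝ)) ≤
        (if ((a 0 : ℝ)) = 0 then (0:ℝ)
          else (max ((a 0 : ℝ) - (a 1 : ℝ)) 0) ^ β / (a 0 : ℝ) ^ (β - 1)) := by
      by_cases h0 : ((a 0 : ℝ)) = 0
      · rw [if_pos h0, if_pos h0]
      · rw [if_neg h0, if_neg h0]
        have hpos : (0:ℝ) < (a 0 : ℝ) :=
          lt_of_le_of_ne (Nat.cast_nonneg _) (Ne.symm h0)
        exact quad_le_rpow β (a 0 : ℝ) _ hβ1 hβ2 (le_max_right _ _)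
          (max_le (by linarith [Nat.cast_nonneg (α := ℝ) (a 1)]) (le_of_lt hpos)) hpos
    linarith [hk, hq, hdiv]
  | succ K IH =>
    have hpow : (0:ℝ) < lam ^ (K + 1) := by positivity
    set SK : ℝ := ∑ j ∈ Finset.range (K + 1), (a j : ℝ) with hSK
    set AK : ℝ := (a (K + 1) : ℝ) with hAK
    set BK : ℝ := (a (K + 1 + 1) : ℝ) with hBK
    have hSKnn : 0 ≤ SK := Finset.sum_nonneg fun j _ => Nat.cast_nonneg _
    have hsum : (∑ j ∈ Finset.range (K + 1 + 1), (a j : ℝ)) = SK + AK :=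
      Finset.sum_range_succ _ _
    have hk := key_step lam SK AK BK hSKnn (Nat.cast_nonneg _) (Nat.cast_nonneg _) hl1 hl2
    set m : ℝ := min AK ((lam - 1/4) * SK + (1 - lam) * AK) with hm
    set mnew : ℝ := min BK ((lam - 1/4) * (SK + AK) + (1 - lam) * BK) with hmnew
    set Q2 : ℝ := (if SK + AK = 0 then (0:ℝ) else (max (SK + AK - BK) 0) ^ 2 / (SK + AK))
      with hQ2
    have hkey : lam ^ (K + 1) * ((2 * lam - 1) / (2 * lam) * AK) + lam ^ K * m ≤
        lam ^ (K + 1) * Q2 + lam ^ (K + 1) * mnew := by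
      have h2 := mul_le_mul_of_nonneg_left hk hpow.le
      have e1 : lam ^ (K + 1) * ((2 * lam - 1) / (2 * lam) * AK + m / lam) =
          lam ^ (K + 1) * ((2 * lam - 1) / (2 * lam) * AK) + lam ^ K * m := by
        rw [pow_succ]
        field_simp
      have e2 : lam ^ (K + 1) * (Q2 + mnew) =
          lam ^ (K + 1) * Q2 + lam ^ (K + 1) * mnew := by ring
      rw [e1, e2] at h2
      exact h2
    have hterm : lam ^ (K + 1) * Q2 ≤
        (if SK + AK = 0 then (0:ℝ)
          else (max (SK + AK - BK) 0) ^ β / (SK + AK) ^ (β - 1) * lam ^ (K + 1)) := by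
      by_cases h0 : SK + AK = 0
      · rw [hQ2, if_pos h0, if_pos h0, mul_zero]
      · rw [hQ2, if_neg h0, if_neg h0]
        have hpos : (0:ℝ) < SK + AK := lt_of_le_of_ne (by positivity) (Ne.symm h0)
        have hqr := quad_le_rpow β (SK + AK) (max (SK + AK - BK) 0) hβ1 hβ2
          (le_max_right _ _)
          (max_le (by linarith [Nat.cast_nonneg (α := ℝ) (a (K + 1 + 1))]) hpos.le) hpos
        calc lam ^ (K + 1) * ((max (SK + AK - BK) 0) ^ 2 / (SK + AK))
            ≤ lam ^ (K + 1) * ((max (SK + AK - BK) 0) ^ β / (SK + AK) ^ (β - 1)) :=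
              mul_le_mul_of_nonneg_left hqr hpow.le
          _ = _ := by ring
    have eA : (∑ k ∈ Finset.range (K + 1 + 1), (a k : ℝ) * lam ^ k) =
        (∑ k ∈ Finset.range (K + 1), (a k : ℝ) * lam ^ k) + AK * lam ^ (K + 1) :=
      Finset.sum_range_succ _ _
    have eT : (∑ k ∈ Finset.range (K + 1 + 1),
          (if (∑ j ∈ Finset.range (k + 1), (a j : ℝ)) = 0 then (0:ℝ)
            else (max ((∑ j ∈ Finset.range (k + 1), (a j : ℝ)) - (a (k + 1) : ℝ)) 0) ^ β /
              (∑ j ∈ Finset.range (k + 1), (a j : ℝ)) ^ (β - 1) * lam ^ k)) =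
        (∑ k ∈ Finset.range (K + 1),
          (if (∑ j ∈ Finset.range (k + 1), (a j : ℝ)) = 0 then (0:ℝ)
            else (max ((∑ j ∈ Finset.range (k + 1), (a j : ℝ)) - (a (k + 1) : ℝ)) 0) ^ β /
              (∑ j ∈ Finset.range (k + 1), (a j : ℝ)) ^ (β - 1) * lam ^ k)) +
          (if (∑ j ∈ Finset.range (K + 1 + 1), (a j : ℝ)) = 0 then (0:ℝ)
            else (max ((∑ j ∈ Finset.range (K + 1 + 1), (a j : ℝ)) - (a (K + 1 + 1) : ℝ)) 0) ^ β /
              (∑ j ∈ Finset.range (K + 1 + 1), (a j : ℝ)) ^ (β - 1) * lam ^ (K + 1)) :=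
      Finset.sum_range_succ _ _
    rw [eA, eT, hsum, mul_add]
    linarith [IH, hkey, hterm]
theorem stmt_0 (K : ℕ) (a : ℕ → ℕ) (ha : a (K + 1) = 0)
    (β lam : ℝ) (hβ1 : 1 < β) (hβ2 : β < 2) (hl1 : 3 / 4 < lam) (hl2 : lam < 1) :
    (2 * lam - 1) / (2 * lam) * ∑ k ∈ Finset.range (K + 1), (a k : ℝ) * lam ^ k ≤
      ∑ k ∈ Finset.range (K + 1),
        (if (∑ j ∈ Finset.range (k + 1), (a j : ℝ)) = 0 then 0
          else (max ((∑ j ∈ Finset.range (k + 1), (a j : ℝ)) - (a (k + 1) : ℝ)) 0) ^ β /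
            (∑ j ∈ Finset.range (k + 1), (a j : ℝ)) ^ (β - 1) * lam ^ k) := by
  have h := aux_induction a β lam hβ1 hβ2 hl1 hl2 K
  rw [ha] at h
  have hSnn : (0:ℝ) ≤ ∑ j ∈ Finset.range (K + 1), (a j : ℝ) :=
    Finset.sum_nonneg fun j _ => Nat.cast_nonneg _
  have hmin : min (((0:ℕ) : ℝ))
      ((lam - 1/4) * (∑ j ∈ Finset.range (K + 1), (a j : ℝ)) + (1 - lam) * ((0:ℕ) : ℝ)) = 0 := by
    rw [Nat.cast_zero]
    refine min_eq_left ?_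
    nlinarith
  rw [hmin, mul_zero, add_zero] at h
  exact h
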